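/- Let $P_X$ be a probability mass function on a finite set $\mathcal{X}$, let $k\ge 1$, let $P_{X^k}(x^k)=\prod_{i=1}^k P_X(x_i)$ on $\mathcal{X}^k$, let $D\ge 2$ be an integer, and let $\rho>0$. Then there exists a uniquely decodable code $c\colon\mathcal{X}^k\to\{0,\ldots,D-1\}^*$ with codeword lengths $\ell(x^k)=|c(x^k)|$ such that $\;\frac{\Lambda_k(\rho)}{\rho}\;\le\;\frac{1}{\log D}\,H_{\frac{1}{1+\rho}}(X)+\frac1k$, where $\Lambda_k(\rho)=\frac1k\log_D\Bigl(\sum_{x^k\in\mathcal{X}^k}P_{X^k}(x^k)\,D^{\rho\,\ell(x^k)}\Bigr)$. -/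

import Mathlib

open scoped BigOperators

/-- A fixed-to-variable code `c` on blocks, with codewords that are finite strings over a
`D`-ary alphabet, is *uniquely decodable* if concatenation of codewords is injective on
finite sequences of source blocks. -/
def UniquelyDecodable {A : Type*} {D : ℕ} (c : A → List (Fin D)) : Prop :=
  Function.Injective fun u : List A => (u.map c).flatten

namespace CampbellAux

variable {D : ℕ}

/-- Big-endian base-`D` digits of `w % D^m`, padded to length `m`. -/
def digitsBE (hD : 0 < D) : ℕ → ℕ → List (Fin D)
  | 0, _ => []
  | m+1, w => digitsBE hD m (w / D) ++ [⟨w % D, Nat.mod_lt _ hD⟩]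

lemma length_digitsBE (hD : 0 < D) (m w : ℕ) : (digitsBE hD m w).length = m := by
  induction m generalizing w with
  | zero => rfl
  | succ m ih => simp [digitsBE, ih]

lemma take_digitsBE (hD : 0 < D) {m' m : ℕ} (h : m' ≤ m) (w : ℕ) :
    (digitsBE hD m w).take m' = digitsBE hD m' (w / D ^ (m - m')) := by
  induction m generalizing w with
  | zero =>
    interval_cases m'
    simp [digitsBE]
  | succ m ih =>
    rcases eq_or_lt_of_le h with rfl | hlt
    · simp [List.take_of_length_le (le_of_eq (length_digitsBE hD _ w))]
    · have h' : m' ≤ m := Nat.lt_succ_iff.mp hlt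
      rw [digitsBE, List.take_append_of_le_length (by rw [length_digitsBE]; exact h'),
        ih h']
      congr 1
      rw [Nat.div_div_eq_div_mul, Nat.succ_sub h', pow_succ']

def valFin : List (Fin D) → ℕ := fun l => l.foldl (fun acc d => acc * D + d.val) 0

lemma valAux_digitsBE (hD : 0 < D) (m w a : ℕ) :
    (digitsBE hD m w).foldl (fun acc d => acc * D + d.val) a = a * D ^ m + w % D ^ m := by
  induction m generalizing w a with
  | zero => simp [digitsBE, Nat.mod_one]
  | succ m ih =>
    rw [digitsBE, List.foldl_append, ih]
    simp only [List.foldl_cons, List.foldl_nil]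
    rw [pow_succ', Nat.mod_mul]; ring

lemma digitsBE_injOn (hD : 0 < D) {m u v : ℕ} (hu : u < D ^ m) (hv : v < D ^ m)
    (h : digitsBE hD m u = digitsBE hD m v) : u = v := by
  have h1 := valAux_digitsBE hD m u 0
  have h2 := valAux_digitsBE hD m v 0
  rw [h] at h1
  rw [Nat.mod_eq_of_lt hu] at h1
  rw [Nat.mod_eq_of_lt hv] at h2
  omega


lemma kraft_exists {A : Type*} [Fintype A] (hD : 1 < D) (ℓ : A → ℕ)
    (hkraft : ∑ a, ((D : ℝ) ^ (ℓ a))⁻¹ ≤ 1) :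
    ∃ c : A → List (Fin D), (∀ a, (c a).length = ℓ a) ∧
      (∀ a b, c a <+: c b → a = b) := by
  classical
  have hD0 : 0 < D := by omega
  have hD0 : 0 < D := by omega
  -- linear order refining ℓ
  let e : A ≃ Fin (Fintype.card A) := Fintype.equivFin A
  let r : A → A → Prop := fun a b => ℓ a < ℓ b ∨ (ℓ a = ℓ b ∧ e a < e b)
  have hr_trans : ∀ {a b c}, r a b → r b c → r a c := by
    rintro a b c (h1 | ⟨h1, h1'⟩) (h2 | ⟨h2, h2'⟩)
    · exact Or.inl (h1.trans h2)
    · exact Or.inl (h2 ▸ h1)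
    · exact Or.inl (h1 ▸ h2)
    · exact Or.inr ⟨h1.trans h2, h1'.trans h2'⟩
  have hr_irrefl : ∀ a, ¬ r a a := by
    rintro a (h | ⟨_, h⟩) <;> exact lt_irrefl _ h
  have hr_total : ∀ {a b}, a ≠ b → r a b ∨ r b a := by
    intro a b hab
    rcases lt_trichotomy (ℓ a) (ℓ b) with h | h | h
    · exact Or.inl (Or.inl h)
    · rcases lt_or_gt_of_ne (fun he => hab (e.injective he)) with h' | h'
      · exact Or.inl (Or.inr ⟨h, h'⟩)
      · exact Or.inr (Or.inr ⟨h.symm, h'⟩)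
    · exact Or.inr (Or.inl h)
  have hr_le : ∀ {a b}, r a b → ℓ a ≤ ℓ b := by
    rintro a b (h | ⟨h, _⟩); exact h.le; exact h.le
  let w : A → ℕ := fun a => ∑ b ∈ Finset.univ.filter (fun b => r b a), D ^ (ℓ a - ℓ b)
  -- Kraft numeric bound
  have hw_lt : ∀ a, w a < D ^ (ℓ a) := by
    intro a
    have key : ((w a : ℝ) + 1) ≤ (D : ℝ) ^ (ℓ a) := by
      have h1 : ∑ b ∈ insert a (Finset.univ.filter (fun b => r b a)),
          ((D : ℝ) ^ (ℓ b))⁻¹ ≤ 1 := by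
        refine le_trans (Finset.sum_le_sum_of_subset_of_nonneg (Finset.subset_univ _) ?_) hkraft
        intro b _ _
        positivity
      have hnotmem : a ∉ Finset.univ.filter (fun b => r b a) := by
        simp [hr_irrefl a]
      rw [Finset.sum_insert hnotmem] at h1
      have hDpos : (0:ℝ) < (D:ℝ) ^ (ℓ a) := by positivity
      have h2 : ((w a : ℝ) + 1) = ((∑ b ∈ Finset.univ.filter (fun b => r b a),
          ((D : ℝ) ^ (ℓ b))⁻¹) + ((D : ℝ) ^ (ℓ a))⁻¹) * (D : ℝ) ^ (ℓ a) := by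
        rw [add_mul, Finset.sum_mul, inv_mul_cancel₀ (ne_of_gt hDpos)]
        push_cast [w]
        congr 1
        refine Finset.sum_congr rfl (fun b hb => ?_)
        have hb' : r b a := by simpa using hb
        have hle := hr_le hb'
        rw [inv_mul_eq_div, eq_div_iff (by positivity), ← pow_add]
        congr 1
        omega
      rw [h2]
      calc ((∑ b ∈ Finset.univ.filter (fun b => r b a),
          ((D : ℝ) ^ (ℓ b))⁻¹) + ((D : ℝ) ^ (ℓ a))⁻¹) * (D : ℝ) ^ (ℓ a)
          ≤ 1 * (D : ℝ) ^ (ℓ a) := by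
            exact mul_le_mul_of_nonneg_right (by linarith) hDpos.le
        _ = (D : ℝ) ^ (ℓ a) := one_mul _
    have : ((w a : ℝ) + 1) ≤ ((D ^ (ℓ a) : ℕ) : ℝ) := by push_cast; exact key
    exact_mod_cast lt_of_lt_of_le (by exact_mod_cast Nat.lt_succ_self (w a)) (by exact_mod_cast this)
  -- monotonicity bound
  have hw_mono : ∀ {a b}, r a b → D ^ (ℓ b - ℓ a) * (w a + 1) ≤ w b := by
    intro a b hab
    have hsub : insert a (Finset.univ.filter (fun d => r d a)) ⊆
        Finset.univ.filter (fun d => r d b) := by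
      intro d hd
      rcases Finset.mem_insert.mp hd with rfl | hd
      · simpa using hab
      · have : r d a := by simpa using hd
        simp [hr_trans this hab]
    have hnotmem : a ∉ Finset.univ.filter (fun d => r d a) := by simp [hr_irrefl a]
    have h1 : ∑ d ∈ insert a (Finset.univ.filter (fun d => r d a)), D ^ (ℓ b - ℓ d) ≤ w b :=
      Finset.sum_le_sum_of_subset hsub
    rw [Finset.sum_insert hnotmem] at h1
    have hab_le := hr_le hab
    have h2 : ∀ d ∈ Finset.univ.filter (fun d => r d a),
        D ^ (ℓ b - ℓ d) = D ^ (ℓ b - ℓ a) * D ^ (ℓ a - ℓ d) := by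
      intro d hd
      have : r d a := by simpa using hd
      have hda := hr_le this
      rw [← pow_add]
      congr 1
      omega
    rw [Finset.sum_congr rfl h2, ← Finset.mul_sum] at h1
    calc D ^ (ℓ b - ℓ a) * (w a + 1)
        = D ^ (ℓ b - ℓ a) + D ^ (ℓ b - ℓ a) * w a := by ring
      _ ≤ w b := h1
  refine ⟨fun a => digitsBE hD0 (ℓ a) (w a), fun a => length_digitsBE hD0 _ _, ?_⟩
  intro a b hpre
  by_contra hab
  have hlen : ℓ a ≤ ℓ b := by
    have := hpre.length_le
    rwa [length_digitsBE, length_digitsBE] at this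
  have htake := List.prefix_iff_eq_take.mp hpre
  simp only [length_digitsBE] at htake
  rw [take_digitsBE hD0 hlen] at htake
  have hq_lt : w b / D ^ (ℓ b - ℓ a) < D ^ (ℓ a) := by
    apply Nat.div_lt_of_lt_mul
    calc w b < D ^ (ℓ b) := hw_lt b
      _ = D ^ (ℓ b - ℓ a) * D ^ (ℓ a) := by rw [← pow_add]; congr 1; omega
  have heq : w a = w b / D ^ (ℓ b - ℓ a) :=
    digitsBE_injOn hD0 (hw_lt a) hq_lt htake
  rcases hr_total hab with hr | hr
  · have h1 := hw_mono hr
    have h2 : w a + 1 ≤ w b / D ^ (ℓ b - ℓ a) :=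
      (Nat.le_div_iff_mul_le (by positivity)).mpr (by linarith [h1])
    omega
  · have hba := hr_le hr
    have hba' : ℓ a = ℓ b := le_antisymm hlen hba
    have h1 := hw_mono hr
    have e1 : ℓ a - ℓ b = 0 := by omega
    have e2 : ℓ b - ℓ a = 0 := by omega
    rw [e1, pow_zero, one_mul] at h1
    rw [e2, pow_zero, Nat.div_one] at heq
    omega

lemma uniquelyDecodable_of_prefixFree {A : Type*} {D : ℕ} (c : A → List (Fin D))
    (hne : ∀ a, c a ≠ []) (hpf : ∀ a b, c a <+: c b → a = b) :
    UniquelyDecodable c := by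
  intro u v h
  simp only at h
  induction u generalizing v with
  | nil =>
    cases v with
    | nil => rfl
    | cons b v' =>
      exfalso
      simp only [List.map_nil, List.flatten_nil, List.map_cons, List.flatten_cons] at h
      have := congrArg List.length h
      simp at this
      exact hne b (List.length_eq_zero_iff.mp (by omega))
  | cons a u' ih =>
    cases v with
    | nil =>
      exfalso
      simp only [List.map_nil, List.flatten_nil, List.map_cons, List.flatten_cons] at h
      rcases List.append_eq_nil_iff.mp h with ⟨h1, _⟩
      exact hne a h1
    | cons b v' =>
      simp only [List.map_cons, List.flatten_cons] at h
      have hab : a = b := by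
        have h1 : c a <+: (c b ++ (v'.map c).flatten) := ⟨_, h⟩
        have h2 : c b <+: (c b ++ (v'.map c).flatten) := ⟨_, rfl⟩
        rcases List.prefix_or_prefix_of_prefix h1 h2 with hp | hp
        · exact hpf a b hp
        · exact (hpf b a hp).symm
      subst hab
      have h3 : (u'.map c).flatten = (v'.map c).flatten := by
        exact List.append_cancel_left h
      rw [ih h3]

end CampbellAux

/-- **Campbell's achievability coding theorem.**  For a discrete memoryless source with
per-symbol pmf `P` on a finite alphabet, any block length `k ≥ 1`, alphabet size `D ≥ 2`
and `ρ > 0`, there exists a uniquely decodable `D`-ary code on source blocks of length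
`k` whose codeword lengths `ℓ` satisfy
`Λ_k(ρ)/ρ ≤ H_{1/(1+ρ)}(X)/log D + 1/k`, where
`Λ_k(ρ) = (1/k) log_D ∑ P_{X^k}(x^k) D^{ρ ℓ(x^k)}` and `H_α(X)` is the Rényi entropy. -/
theorem campbell_achievability
    {𝒳 : Type*} [Fintype 𝒳]
    (P : 𝒳 → ℝ) (hP : ∀ x, 0 ≤ P x) (hPsum : ∑ x, P x = 1)
    (k : ℕ) (hk : 1 ≤ k) (D : ℕ) (hD : 2 ≤ D)
    (ρ : ℝ) (hρ : 0 < ρ) :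
    ∃ c : (Fin k → 𝒳) → List (Fin D), UniquelyDecodable c ∧
      ((1 / (k : ℝ)) * Real.logb D
          (∑ xk : Fin k → 𝒳, (∏ i, P (xk i)) * (D : ℝ) ^ (ρ * ((c xk).length : ℝ)))) / ρ
        ≤ (1 / Real.log D) *
            ((1 - 1 / (1 + ρ))⁻¹ * Real.log (∑ x, P x ^ (1 / (1 + ρ))))
          + 1 / (k : ℝ) := by
  classical
  have h1ρ : (0:ℝ) < 1 + ρ := by linarith
  have hDR : (1:ℝ) < (D:ℝ) := by exact_mod_cast (by omega : 1 < D)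
  have hD0 : (0:ℝ) < (D:ℝ) := by linarith
  have hlogD : 0 < Real.log D := Real.log_pos hDR
  have hk0 : (0:ℝ) < (k:ℝ) := by exact_mod_cast hk
  set α : ℝ := 1 / (1 + ρ) with hα_def
  have hα0 : 0 < α := by positivity
  have hαρ : α * (1 + ρ) = 1 := by rw [hα_def]; field_simp
  -- a symbol of positive probability
  have hx0 : ∃ x, 0 < P x := by
    by_contra h
    push_neg at h
    have : ∑ x, P x = 0 := Finset.sum_eq_zero fun x _ => le_antisymm (h x) (hP x)
    rw [hPsum] at this; norm_num at this
  obtain ⟨x₀, hx₀⟩ := hx0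
  set S : ℝ := ∑ x, P x ^ α with hS_def
  have hS0 : 0 < S := by
    refine Finset.sum_pos' (fun x _ => Real.rpow_nonneg (hP x) α) ⟨x₀, Finset.mem_univ _, ?_⟩
    exact Real.rpow_pos_of_pos hx₀ α
  set Pb : (Fin k → 𝒳) → ℝ := fun b => ∏ i, P (b i) with hPb_def
  have hPb0 : ∀ b, 0 ≤ Pb b := fun b => Finset.prod_nonneg fun i _ => hP (b i)
  -- block escort distribution
  set Qb : (Fin k → 𝒳) → ℝ := fun b => Pb b ^ α / S ^ k with hQb_def
  have hQb0 : ∀ b, 0 ≤ Qb b := fun b =>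
    div_nonneg (Real.rpow_nonneg (hPb0 b) α) (pow_nonneg hS0.le k)
  have sumPbα : ∑ b : Fin k → 𝒳, Pb b ^ α = S ^ k := by
    have h1 : ∀ b : Fin k → 𝒳, Pb b ^ α = ∏ i, P (b i) ^ α := fun b =>
      (Real.finset_prod_rpow Finset.univ _ (fun i _ => hP (b i)) α).symm
    have h2 := Finset.prod_univ_sum (fun _ : Fin k => (Finset.univ : Finset 𝒳))
      (fun _ x => P x ^ α)
    rw [Fintype.piFinset_univ] at h2
    rw [Finset.sum_congr rfl fun b _ => h1 b, ← h2, Finset.prod_const, Finset.card_univ,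
      Fintype.card_fin]
  have sumQ : ∑ b : Fin k → 𝒳, Qb b = 1 := by
    rw [hQb_def, ← Finset.sum_div, sumPbα, div_self (by positivity)]
  -- lengths on the support
  set ℓ₀ : (Fin k → 𝒳) → ℕ := fun b => ⌊1 - Real.logb D (Qb b)⌋₊ with hℓ₀_def
  have hQb_facts : ∀ b, 0 < Pb b →
      0 < Qb b ∧ Qb b ≤ 1 ∧ Real.logb D (Qb b) ≤ 0 := by
    intro b hb
    have hq0 : 0 < Qb b := div_pos (Real.rpow_pos_of_pos hb α) (by positivity)
    have hq1 : Qb b ≤ 1 := by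
      rw [← sumQ]
      exact Finset.single_le_sum (fun b _ => hQb0 b) (Finset.mem_univ b)
    have hlogq : Real.logb D (Qb b) ≤ 0 := Real.logb_nonpos hDR (hQb0 b) hq1
    exact ⟨hq0, hq1, hlogq⟩
  have hfloor_le : ∀ b, 0 < Pb b → (ℓ₀ b : ℝ) ≤ 1 - Real.logb D (Qb b) := by
    intro b hb
    exact Nat.floor_le (by linarith [(hQb_facts b hb).2.2])
  have hfloor_gt : ∀ b, 0 < Pb b → -Real.logb D (Qb b) < (ℓ₀ b : ℝ) := by
    intro b hb
    have h := Nat.sub_one_lt_floor (1 - Real.logb D (Qb b))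
    have he : (ℓ₀ b : ℝ) = (⌊1 - Real.logb D (Qb b)⌋₊ : ℝ) := by rw [hℓ₀_def]
    rw [he]; linarith
  have hℓ₀_pos : ∀ b, 0 < Pb b → 1 ≤ ℓ₀ b := by
    intro b hb
    have h := (hQb_facts b hb).2.2
    exact Nat.le_floor (by push_cast; linarith)
  -- per-term Kraft bound on the support
  have hkraft_term : ∀ b, 0 < Pb b → ((D:ℝ) ^ (ℓ₀ b))⁻¹ < Qb b := by
    intro b hb
    have hq0 := (hQb_facts b hb).1
    have h1 : (D:ℝ) ^ (-(ℓ₀ b : ℝ)) < (D:ℝ) ^ Real.logb D (Qb b) := by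
      rw [Real.rpow_lt_rpow_left_iff hDR]
      linarith [hfloor_gt b hb]
    rw [Real.rpow_logb hD0 hDR.ne' hq0] at h1
    rw [Real.rpow_neg hD0.le, Real.rpow_natCast] at h1
    exact h1
  set F : Finset (Fin k → 𝒳) := Finset.univ.filter (fun b => 0 < Pb b) with hF_def
  have hF_ne : F.Nonempty := by
    refine ⟨fun _ => x₀, ?_⟩
    simp only [hF_def, Finset.mem_filter, Finset.mem_univ, true_and]
    exact Finset.prod_pos fun i _ => hx₀
  set K : ℝ := ∑ b ∈ F, ((D:ℝ) ^ (ℓ₀ b))⁻¹ with hK_def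
  have hK1 : K < 1 := by
    have h1 : K < ∑ b ∈ F, Qb b := by
      refine Finset.sum_lt_sum_of_nonempty hF_ne fun b hb => ?_
      rw [hF_def] at hb
      exact hkraft_term b (by simpa using hb)
    have h2 : ∑ b ∈ F, Qb b ≤ 1 := by
      rw [← sumQ]
      exact Finset.sum_le_sum_of_subset_of_nonneg (Finset.subset_univ _)
        (fun b _ _ => hQb0 b)
    linarith
  have hK0 : 0 ≤ K := Finset.sum_nonneg fun b _ => by positivity
  -- choose length for the zero-probability blocks
  obtain ⟨L0, hL0⟩ := pow_unbounded_of_one_lt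
    ((Fintype.card (Fin k → 𝒳) : ℝ) / (1 - K)) hDR
  set L : ℕ := max L0 1 with hL_def
  have hL : (Fintype.card (Fin k → 𝒳) : ℝ) * ((D:ℝ) ^ L)⁻¹ ≤ 1 - K := by
    have h1 : (D:ℝ) ^ L0 ≤ (D:ℝ) ^ L := pow_le_pow_right₀ hDR.le (le_max_left _ _)
    have h2 : (Fintype.card (Fin k → 𝒳) : ℝ) / (1 - K) < (D:ℝ) ^ L := lt_of_lt_of_le hL0 h1
    rw [div_lt_iff₀ (by linarith)] at h2
    rw [mul_inv_le_iff₀ (by positivity)]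
    nlinarith
  set ℓ : (Fin k → 𝒳) → ℕ := fun b => if 0 < Pb b then ℓ₀ b else L with hℓ_def
  have hℓ_pos : ∀ b, 1 ≤ ℓ b := by
    intro b
    by_cases hb : 0 < Pb b
    · simpa [hℓ_def, hb] using hℓ₀_pos b hb
    · have : ℓ b = L := by simp [hℓ_def, hb]
      rw [this, hL_def]
      exact le_max_right L0 1
  -- total Kraft inequality
  have hkraft : ∑ b : Fin k → 𝒳, ((D:ℝ) ^ (ℓ b))⁻¹ ≤ 1 := by
    rw [← Finset.sum_filter_add_sum_filter_not Finset.univ (fun b => 0 < Pb b)]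
    have e1 : ∑ b ∈ Finset.univ.filter (fun b => 0 < Pb b), ((D:ℝ) ^ (ℓ b))⁻¹ = K := by
      rw [hK_def]
      refine Finset.sum_congr rfl fun b hb => ?_
      have : 0 < Pb b := by rw [hF_def] at hb; exact (Finset.mem_filter.mp hb).2
      simp [hℓ_def, this]
    have e2 : ∑ b ∈ Finset.univ.filter (fun b => ¬ 0 < Pb b), ((D:ℝ) ^ (ℓ b))⁻¹
        ≤ (Fintype.card (Fin k → 𝒳) : ℝ) * ((D:ℝ) ^ L)⁻¹ := by
      have : ∀ b ∈ Finset.univ.filter (fun b => ¬ 0 < Pb b),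
          ((D:ℝ) ^ (ℓ b))⁻¹ = ((D:ℝ) ^ L)⁻¹ := by
        intro b hb
        have : ¬ 0 < Pb b := by simpa using hb
        simp [hℓ_def, this]
      rw [Finset.sum_congr rfl this, Finset.sum_const, nsmul_eq_mul]
      have hcard : (Finset.univ.filter (fun b : Fin k → 𝒳 => ¬ 0 < Pb b)).card
          ≤ Fintype.card (Fin k → 𝒳) := Finset.card_filter_le _ _
      have := @Nat.cast_le ℝ _ _ _ |>.mpr hcard
      have hpos : (0:ℝ) ≤ ((D:ℝ) ^ L)⁻¹ := by positivity
      exact mul_le_mul_of_nonneg_right this hpos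
    rw [e1]
    linarith
  -- get the prefix-free code
  obtain ⟨c, hclen, hcpf⟩ := CampbellAux.kraft_exists (by omega : 1 < D) ℓ hkraft
  have hcne : ∀ b, c b ≠ [] := by
    intro b h
    have h1 := hclen b
    rw [h] at h1
    simp only [List.length_nil] at h1
    have h2 := hℓ_pos b
    omega
  refine ⟨c, CampbellAux.uniquelyDecodable_of_prefixFree c hcne hcpf, ?_⟩
  have hρ' : ρ ≠ 0 := hρ.ne'
  have hαρ2 : 1 + α * (-ρ) = α := by rw [hα_def]; field_simp; ring
  -- termwise bound on the support
  have hterm : ∀ b : Fin k → 𝒳, Pb b * (D:ℝ) ^ (ρ * ((c b).length : ℝ))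
      ≤ (D:ℝ) ^ ρ * S ^ ((k:ℝ) * ρ) * Pb b ^ α := by
    intro b
    by_cases hb : 0 < Pb b
    · have hlb : ((c b).length : ℝ) = (ℓ₀ b : ℝ) := by
        rw [hclen b]
        simp [hℓ_def, hb]
      rw [hlb]
      have hq0 : 0 < Qb b := (hQb_facts b hb).1
      have hSk : (0:ℝ) < S ^ k := by positivity
      have h1 : (D:ℝ) ^ (ρ * (ℓ₀ b : ℝ)) ≤ (D:ℝ) ^ (ρ * (1 - Real.logb D (Qb b))) := by
        rw [Real.rpow_le_rpow_left_iff hDR]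
        have := hfloor_le b hb
        nlinarith
      have h2 : (D:ℝ) ^ (ρ * (1 - Real.logb D (Qb b))) = (D:ℝ) ^ ρ * Qb b ^ (-ρ) := by
        rw [show ρ * (1 - Real.logb D (Qb b)) = ρ + Real.logb D (Qb b) * (-ρ) by ring,
          Real.rpow_add hD0, Real.rpow_mul hD0.le, Real.rpow_logb hD0 hDR.ne' hq0]
      have e1 : Qb b = Pb b ^ α * (S ^ k)⁻¹ := div_eq_mul_inv _ _
      have e2 : Qb b ^ (-ρ) = (Pb b ^ α) ^ (-ρ) * ((S ^ k)⁻¹) ^ (-ρ) := by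
        rw [e1, Real.mul_rpow (Real.rpow_nonneg (hPb0 b) _) (inv_nonneg.mpr hSk.le)]
      have e3 : (Pb b ^ α) ^ (-ρ) = Pb b ^ (α * (-ρ)) := (Real.rpow_mul (hPb0 b) _ _).symm
      have e4 : ((S ^ k : ℝ)⁻¹) ^ (-ρ) = (S ^ k : ℝ) ^ ρ := by
        rw [Real.inv_rpow hSk.le, Real.rpow_neg hSk.le, inv_inv]
      have e5 : (S ^ k : ℝ) ^ ρ = S ^ ((k:ℝ) * ρ) := by
        rw [← Real.rpow_natCast S k, ← Real.rpow_mul hS0.le]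
      have e6 : Pb b * Pb b ^ (α * (-ρ)) = Pb b ^ α := by
        nth_rewrite 1 [← Real.rpow_one (Pb b)]
        rw [← Real.rpow_add hb, hαρ2]
      have key : Pb b * Qb b ^ (-ρ) = S ^ ((k:ℝ) * ρ) * Pb b ^ α := by
        rw [e2, e3, e4, e5]
        calc Pb b * (Pb b ^ (α * -ρ) * S ^ ((k:ℝ) * ρ))
            = (Pb b * Pb b ^ (α * -ρ)) * S ^ ((k:ℝ) * ρ) := by ring
          _ = Pb b ^ α * S ^ ((k:ℝ) * ρ) := by rw [e6]
          _ = S ^ ((k:ℝ) * ρ) * Pb b ^ α := by ring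
      calc Pb b * (D:ℝ) ^ (ρ * (ℓ₀ b : ℝ))
          ≤ Pb b * ((D:ℝ) ^ ρ * Qb b ^ (-ρ)) := by
            rw [← h2]
            exact mul_le_mul_of_nonneg_left h1 (hPb0 b)
        _ = (D:ℝ) ^ ρ * (Pb b * Qb b ^ (-ρ)) := by ring
        _ = (D:ℝ) ^ ρ * (S ^ ((k:ℝ) * ρ) * Pb b ^ α) := by rw [key]
        _ = (D:ℝ) ^ ρ * S ^ ((k:ℝ) * ρ) * Pb b ^ α := by ring
    · have hb0 : Pb b = 0 := le_antisymm (not_lt.mp hb) (hPb0 b)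
      rw [hb0, Real.zero_rpow hα0.ne', zero_mul, mul_zero]
  -- sum bound
  have hsum : (∑ b : Fin k → 𝒳, Pb b * (D:ℝ) ^ (ρ * ((c b).length : ℝ)))
      ≤ (D:ℝ) ^ ρ * S ^ ((k:ℝ) * ρ) * S ^ k :=
    calc (∑ b : Fin k → 𝒳, Pb b * (D:ℝ) ^ (ρ * ((c b).length : ℝ)))
        ≤ ∑ b : Fin k → 𝒳, (D:ℝ) ^ ρ * S ^ ((k:ℝ) * ρ) * Pb b ^ α :=
          Finset.sum_le_sum fun b _ => hterm b
      _ = (D:ℝ) ^ ρ * S ^ ((k:ℝ) * ρ) * ∑ b : Fin k → 𝒳, Pb b ^ α := by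
          rw [← Finset.mul_sum]
      _ = (D:ℝ) ^ ρ * S ^ ((k:ℝ) * ρ) * S ^ k := by rw [sumPbα]
  have hSigpos : 0 < ∑ b : Fin k → 𝒳, Pb b * (D:ℝ) ^ (ρ * ((c b).length : ℝ)) := by
    refine Finset.sum_pos'
      (fun b _ => mul_nonneg (hPb0 b) (Real.rpow_nonneg hD0.le _))
      ⟨fun _ => x₀, Finset.mem_univ _, ?_⟩
    exact mul_pos (Finset.prod_pos fun i _ => hx₀) (Real.rpow_pos_of_pos hD0 _)
  have hRpos : (0:ℝ) < (D:ℝ) ^ ρ * S ^ ((k:ℝ) * ρ) * S ^ k := by positivity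
  have hlog : Real.logb D (∑ b : Fin k → 𝒳, Pb b * (D:ℝ) ^ (ρ * ((c b).length : ℝ)))
      ≤ ρ + ((k:ℝ) * ρ + (k:ℝ)) * (Real.log S / Real.log D) := by
    have h1 := (Real.logb_le_logb hDR hSigpos hRpos).mpr hsum
    have h2 : Real.logb D ((D:ℝ) ^ ρ * S ^ ((k:ℝ) * ρ) * S ^ k)
        = ρ + ((k:ℝ) * ρ + (k:ℝ)) * (Real.log S / Real.log D) := by
      have e7 : (D:ℝ) ^ ρ * S ^ ((k:ℝ) * ρ) * S ^ k = (D:ℝ) ^ ρ * S ^ ((k:ℝ) * ρ + (k:ℝ)) := by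
        rw [Real.rpow_add hS0, ← Real.rpow_natCast S k, mul_assoc]
      rw [e7, Real.logb_mul (by positivity) (by positivity), Real.logb_rpow hD0 hDR.ne',
        Real.logb, Real.log_rpow hS0]
      ring
    rw [h2] at h1
    exact h1
  -- final arithmetic
  have hstep : ((1/(k:ℝ)) * Real.logb D
      (∑ b : Fin k → 𝒳, Pb b * (D:ℝ) ^ (ρ * ((c b).length : ℝ)))) / ρ
      ≤ ((1/(k:ℝ)) * (ρ + ((k:ℝ) * ρ + (k:ℝ)) * (Real.log S / Real.log D))) / ρ := by
    refine (div_le_div_iff_of_pos_right hρ).mpr ?_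
    exact mul_le_mul_of_nonneg_left hlog (by positivity)
  have hfinal : ((1/(k:ℝ)) * (ρ + ((k:ℝ) * ρ + (k:ℝ)) * (Real.log S / Real.log D))) / ρ
      = (1 / Real.log D) * ((1 - α)⁻¹ * Real.log S) + 1 / (k:ℝ) := by
    rw [hα_def]
    have h1ρ' : (1:ℝ) + ρ ≠ 0 := by linarith
    have hd : (1:ℝ) - 1/(1+ρ) = ρ/(1+ρ) := by field_simp; ring
    rw [hd]
    field_simp
    ring
  exact le_trans hstep (le_of_eq hfinal)
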